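/- Positivity of the Kretschmann invariant: for every k̃ ∈ ℝ and every ρ ∈ (0, ∞) with ρ ≠ r_s, the Kretschmann function satisfies K(ρ) > 0; equivalently, for every s ∈ {−1, +1} and every u > 0, the bracket 4k̃²(k̃+1)·s·u + ζ(4k̃³ − 5k̃² − 3)(1 − u²) + (9k̃⁴ − 2k̃³ + 10k̃² + 3)(1 + u²) is strictly positive. -/

import Mathlib

open Real Filter Topology

/-- The bracket is strictly positive for every sign `s ∈ {−1,+1}` and `u > 0`. -/
lemma quad_pos_of_discrim {a b c u : ℝ} (ha : 0 < a) (h : b ^ 2 < 4 * a * c) :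
    0 < a * u ^ 2 + b * u + c := by
  nlinarith [sq_nonneg (2 * a * u + b), ha, h]

/-- The bracket is strictly positive for every sign `s ∈ {−1,+1}` and `u > 0`. -/
lemma kretschmann_bracket_pos (k ζ : ℝ) (hζ : ζ = Real.sqrt (1 + 3 * k ^ 2))
    (s : ℝ) (hs : s = -1 ∨ s = 1) (u : ℝ) (hu : 0 < u) :
    0 < 4 * k ^ 2 * (k + 1) * s * u +
      ζ * (4 * k ^ 3 - 5 * k ^ 2 - 3) * (1 - u ^ 2) +
      (9 * k ^ 4 - 2 * k ^ 3 + 10 * k ^ 2 + 3) * (1 + u ^ 2) := by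
  have hζ2 : ζ ^ 2 = 1 + 3 * k ^ 2 := by
    rw [hζ]; exact Real.sq_sqrt (by positivity)
  have hζ0 : 0 ≤ ζ := hζ ▸ Real.sqrt_nonneg _
  by_cases hk0 : k = 0
  · subst hk0
    have hζ1 : ζ = 1 := by rw [hζ]; norm_num
    subst hζ1
    rcases hs with rfl | rfl <;> nlinarith [mul_pos hu hu]
  · by_cases hk1 : k = -1
    · subst hk1
      have hζ1 : ζ = 2 := by
        rw [hζ]; norm_num
      subst hζ1
      rcases hs with rfl | rfl <;> nlinarith [mul_pos hu hu]
    · -- generic case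
      set D : ℝ := 9 * k ^ 4 - 2 * k ^ 3 + 10 * k ^ 2 + 3 with hDdef
      set E : ℝ := 4 * k ^ 3 - 5 * k ^ 2 - 3 with hEdef
      have hq : 0 < k ^ 2 * (k + 1) ^ 2 := by
        have h1 : k + 1 ≠ 0 := fun h => hk1 (by linarith)
        positivity
      have hR : 0 < 132 * k ^ 4 + 72 * k ^ 3 + 80 * k ^ 2 + 24 * k + 12 := by
        nlinarith [sq_nonneg (6 * k ^ 2 + 6 * k), sq_nonneg (k + 1), sq_nonneg k,
          sq_nonneg (k ^ 2)]
      have hgap : (4 * k ^ 2 * (k + 1)) ^ 2 <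
          4 * (D ^ 2 - (1 + 3 * k ^ 2) * E ^ 2) := by
        rw [hDdef, hEdef]
        nlinarith [mul_pos hq hR]
      have hgap2 : (4 * k ^ 2 * (k + 1)) ^ 2 < 4 * (D ^ 2 - (ζ * E) ^ 2) := by
        have : (ζ * E) ^ 2 = (1 + 3 * k ^ 2) * E ^ 2 := by
          rw [mul_pow, hζ2]
        rw [this]; exact hgap
      have hD : 0 < D := by
        rw [hDdef]; nlinarith [sq_nonneg (3 * k ^ 2 - k), sq_nonneg k]
      have hDE : (ζ * E) ^ 2 < D ^ 2 := by
        nlinarith [hgap2, sq_nonneg (4 * k ^ 2 * (k + 1))]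
      have habs : |ζ * E| < D := abs_lt_of_sq_lt_sq hDE hD.le
      obtain ⟨hlo, hhi⟩ := abs_lt.mp habs
      have ha : 0 < D - ζ * E := by linarith
      have hc : 0 < D + ζ * E := by linarith
      have hAs : (4 * k ^ 2 * (k + 1) * s) ^ 2 = (4 * k ^ 2 * (k + 1)) ^ 2 := by
        rcases hs with rfl | rfl <;> ring
      have hprod : (4 * k ^ 2 * (k + 1) * s) ^ 2 <
          4 * (D - ζ * E) * (D + ζ * E) := by
        rw [hAs]; nlinarith [hgap2]
      have h := quad_pos_of_discrim (u := u) ha hprod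
      nlinarith [h]

/-- Positivity of the Kretschmann invariant: `K(ρ) > 0` for all `ρ ∈ (0,∞)`, `ρ ≠ r_s`;
equivalently the bracket is strictly positive for every sign `s ∈ {−1,+1}` and `u > 0`. -/
theorem kretschmann_positivity
    (rs kt : ℝ) (hrs : 0 < rs)
    (ζ : ℝ) (hζ : ζ = Real.sqrt (1 + 3 * kt ^ 2))
    (K : ℝ → ℝ)
    (hK : ∀ ρ : ℝ, 0 < ρ → ρ ≠ rs → K ρ =
      (2 / (ζ ^ 8 * rs ^ 4)) *
        (1 - Real.sign (1 - rs / ρ) * |1 - rs / ρ| ^ ζ) ^ 6 *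
        |1 - rs / ρ| ^ (2 - 4 * ζ - 2 * kt) *
        (4 * kt ^ 2 * (kt + 1) * Real.sign (1 - rs / ρ) * |1 - rs / ρ| ^ ζ +
          ζ * (4 * kt ^ 3 - 5 * kt ^ 2 - 3) * (1 - |1 - rs / ρ| ^ (2 * ζ)) +
          (9 * kt ^ 4 - 2 * kt ^ 3 + 10 * kt ^ 2 + 3) * (1 + |1 - rs / ρ| ^ (2 * ζ)))) :
    (∀ ρ : ℝ, 0 < ρ → ρ ≠ rs → 0 < K ρ) ∧
      (∀ s : ℝ, s = -1 ∨ s = 1 → ∀ u : ℝ, 0 < u →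
        0 < 4 * kt ^ 2 * (kt + 1) * s * u +
          ζ * (4 * kt ^ 3 - 5 * kt ^ 2 - 3) * (1 - u ^ 2) +
          (9 * kt ^ 4 - 2 * kt ^ 3 + 10 * kt ^ 2 + 3) * (1 + u ^ 2)) := by
  have hζpos : 0 < ζ := hζ ▸ Real.sqrt_pos.mpr (by positivity)
  refine ⟨?_, fun s hs u hu => kretschmann_bracket_pos kt ζ hζ s hs u hu⟩
  intro ρ hρ hne
  rw [hK ρ hρ hne]
  set x : ℝ := 1 - rs / ρ with hxdef
  have hx : x ≠ 0 := by
    intro h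
    rw [hxdef] at h
    apply hne
    have hρ0 : ρ ≠ 0 := ne_of_gt hρ
    field_simp at h
    linarith
  have habs : 0 < |x| := abs_pos.mpr hx
  have hu : 0 < |x| ^ ζ := Real.rpow_pos_of_pos habs ζ
  have h2ζ : |x| ^ (2 * ζ) = (|x| ^ ζ) ^ 2 := by
    rw [show (2:ℝ) * ζ = ζ + ζ by ring, Real.rpow_add habs, sq]
  have hsign : Real.sign x = -1 ∨ Real.sign x = 1 := by
    rcases hx.lt_or_gt with h | h
    · exact Or.inl (Real.sign_of_neg h)
    · exact Or.inr (Real.sign_of_pos h)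
  have hbr : 0 < 4 * kt ^ 2 * (kt + 1) * Real.sign x * |x| ^ ζ +
      ζ * (4 * kt ^ 3 - 5 * kt ^ 2 - 3) * (1 - |x| ^ (2 * ζ)) +
      (9 * kt ^ 4 - 2 * kt ^ 3 + 10 * kt ^ 2 + 3) * (1 + |x| ^ (2 * ζ)) := by
    rw [h2ζ]
    exact kretschmann_bracket_pos kt ζ hζ (Real.sign x) hsign (|x| ^ ζ) hu
  have hpref : 0 < 2 / (ζ ^ 8 * rs ^ 4) := by positivity
  have hmid : 0 < |x| ^ (2 - 4 * ζ - 2 * kt) := Real.rpow_pos_of_pos habs _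
  have hsix : 0 < (1 - Real.sign x * |x| ^ ζ) ^ 6 := by
    have hbase : 0 < 1 - Real.sign x * |x| ^ ζ := by
      rcases hx.lt_or_gt with h | h
      · rw [Real.sign_of_neg h]; nlinarith
      · rw [Real.sign_of_pos h]
        have hxlt : |x| < 1 := by
          rw [abs_of_pos h]
          have : 0 < rs / ρ := div_pos hrs hρ
          simp only [hxdef]; linarith
        have : |x| ^ ζ < 1 := Real.rpow_lt_one (le_of_lt habs) hxlt hζpos
        linarith
    positivity
  exact mul_pos (mul_pos (mul_pos hpref hsix) hmid) hbr
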